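/- For the Z-channel with crossover probability φ ∈ (0,1), the mutual information I(ξ) = ξφ log φ − ξ(1−φ) log ξ − (1−ξ+ξφ) log(1−ξ+ξφ) is maximized over ξ ∈ [0,1] at ξ* = 1 / (φ^{φ/(φ−1)} − φ + 1). -/

import Mathlib

open Real

/-- For the Z-channel with crossover probability `φ ∈ (0,1)`, the mutual
information `I(ξ) = ξφ log φ − ξ(1−φ) log ξ − (1−ξ+ξφ) log(1−ξ+ξφ)` (base-2
logs, `0 log 0 = 0`) is maximized over `ξ ∈ [0,1]` at
`ξ* = 1 / (φ^{φ/(φ−1)} − φ + 1)`. -/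
theorem zChannel_optimal_input
    (φ : ℝ) (hφ : φ ∈ Set.Ioo (0 : ℝ) 1) :
    IsMaxOn
      (fun ξ : ℝ => ξ * φ * logb 2 φ - ξ * (1 - φ) * logb 2 ξ
        - (1 - ξ + ξ * φ) * logb 2 (1 - ξ + ξ * φ))
      (Set.Icc (0 : ℝ) 1)
      (1 / (φ ^ (φ / (φ - 1)) - φ + 1)) := by
  obtain ⟨hφ0, hφ1⟩ := hφ
  have hl2 : (0:ℝ) < Real.log 2 := Real.log_pos (by norm_num)
  set F : ℝ → ℝ := fun ξ : ℝ => ξ * φ * logb 2 φ - ξ * (1 - φ) * logb 2 ξ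
        - (1 - ξ + ξ * φ) * logb 2 (1 - ξ + ξ * φ) with hF
  have hFeq : F = fun ξ : ℝ => (ξ * φ * Real.log φ - (1 - φ) * (ξ * Real.log ξ)
      - ((1 - ξ + ξ * φ) * Real.log (1 - ξ + ξ * φ))) / Real.log 2 := by
    funext ξ
    simp only [hF, Real.logb, div_eq_mul_inv]
    ring
  set K : ℝ := φ ^ (φ / (φ - 1)) with hKdef
  have hexp : φ / (φ - 1) < 0 := div_neg_of_pos_of_neg hφ0 (by linarith)
  have hK1 : 1 < K := by
    rw [hKdef, Real.one_lt_rpow_iff_of_pos hφ0]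
    exact Or.inr ⟨hφ1, hexp⟩
  set D : ℝ := K - φ + 1 with hDdef
  have hD1 : 1 < D := by simp only [hDdef]; linarith
  have hD0 : D ≠ 0 := by linarith
  set ξs : ℝ := 1 / D with hξsdef
  have hξs_pos : 0 < ξs := by rw [hξsdef]; positivity
  have hξs_lt1 : ξs < 1 := by
    rw [hξsdef]
    exact (div_lt_one (by linarith)).mpr hD1
  have hkey : 1 - ξs + ξs * φ = K * ξs := by
    rw [hξsdef]
    field_simp
    simp only [hDdef]
    ring
  -- the derivative (times log 2) of F
  set g : ℝ → ℝ := fun ξ => φ * Real.log φ - (1 - φ) * Real.log ξ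
      + (1 - φ) * Real.log (1 - ξ + ξ * φ) with hg
  have hlogK : Real.log K = (φ / (φ - 1)) * Real.log φ := Real.log_rpow hφ0 _
  have hg0 : g ξs = 0 := by
    have hlogmul : Real.log (K * ξs) = Real.log K + Real.log ξs :=
      Real.log_mul (by linarith) (ne_of_gt hξs_pos)
    have hcoef : (1 - φ) * ((φ / (φ - 1)) * Real.log φ) = -(φ * Real.log φ) := by
      have hφ1' : φ - 1 ≠ 0 := sub_ne_zero.mpr (ne_of_lt hφ1)
      field_simp
      ring
    simp only [hg, hkey, hlogmul, hlogK]
    linarith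
  -- g is strictly decreasing on (0, 1]
  have hanti : StrictAntiOn g (Set.Ioc (0:ℝ) 1) := by
    intro x hx y hy hxy
    have hlog1 : Real.log x < Real.log y := Real.log_lt_log hx.1 hxy
    have hhy_pos : 0 < 1 - y + y * φ := by nlinarith [hy.2, hy.1, hφ0]
    have hhx_gt : 1 - y + y * φ < 1 - x + x * φ := by nlinarith
    have hlog2 : Real.log (1 - y + y * φ) < Real.log (1 - x + x * φ) :=
      Real.log_lt_log hhy_pos hhx_gt
    have h1φ : (0:ℝ) < 1 - φ := by linarith
    simp only [hg]
    nlinarith [mul_lt_mul_of_pos_left hlog1 h1φ, mul_lt_mul_of_pos_left hlog2 h1φ]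
  -- derivative of F
  have hderiv : ∀ x ∈ Set.Ioo (0:ℝ) 1, HasDerivAt F (g x / Real.log 2) x := by
    intro x hx
    have hx0 : x ≠ 0 := ne_of_gt hx.1
    have hhx_pos : 0 < 1 - x + x * φ := by nlinarith [hx.2, hx.1, hφ0]
    have h1 : HasDerivAt (fun ξ : ℝ => ξ * Real.log ξ) (Real.log x + 1) x :=
      Real.hasDerivAt_mul_log hx0
    have h2 : HasDerivAt (fun ξ : ℝ => 1 - ξ + ξ * φ) (φ - 1) x := by
      have := ((hasDerivAt_const x (1:ℝ)).sub (hasDerivAt_id x)).add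
        ((hasDerivAt_id x).mul_const φ)
      exact this.congr_deriv (by ring)
    have h3 : HasDerivAt (fun ξ : ℝ => (1 - ξ + ξ * φ) * Real.log (1 - ξ + ξ * φ))
        ((Real.log (1 - x + x * φ) + 1) * (φ - 1)) x :=
      by have := (Real.hasDerivAt_mul_log (ne_of_gt hhx_pos)).comp x h2; exact this
    have h4 : HasDerivAt (fun ξ : ℝ => ξ * φ * Real.log φ) (φ * Real.log φ) x := by
      have := ((hasDerivAt_id x).mul_const φ).mul_const (Real.log φ)
      exact this.congr_deriv (by ring)
    have h5 := ((h4.sub (h1.const_mul (1 - φ))).sub h3).div_const (Real.log 2)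
    rw [hFeq]
    refine h5.congr_deriv ?_
    simp only [hg]
    field_simp
    ring
  -- F is continuous on [0,1]
  have hcont : ContinuousOn F (Set.Icc (0:ℝ) 1) := by
    rw [hFeq]
    apply Continuous.continuousOn
    apply Continuous.div_const
    apply Continuous.sub
    · exact ((continuous_id.mul continuous_const).mul continuous_const).sub
        (continuous_const.mul Real.continuous_mul_log)
    · exact Real.continuous_mul_log.comp (by continuity)
  -- strictly monotone on [0, ξs]
  have hmono : StrictMonoOn F (Set.Icc 0 ξs) := by
    apply strictMonoOn_of_deriv_pos (convex_Icc 0 ξs)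
      (hcont.mono (Set.Icc_subset_Icc le_rfl hξs_lt1.le))
    intro x hx
    rw [interior_Icc] at hx
    have hx' : x ∈ Set.Ioo (0:ℝ) 1 := ⟨hx.1, hx.2.trans hξs_lt1⟩
    rw [(hderiv x hx').deriv]
    apply div_pos _ hl2
    have := hanti ⟨hx.1, (hx.2.trans hξs_lt1).le⟩ ⟨hξs_pos, hξs_lt1.le⟩ hx.2
    linarith [hg0 ▸ this]
  -- strictly antitone on [ξs, 1]
  have hanti' : StrictAntiOn F (Set.Icc ξs 1) := by
    apply strictAntiOn_of_deriv_neg (convex_Icc ξs 1)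
      (hcont.mono (Set.Icc_subset_Icc hξs_pos.le le_rfl))
    intro x hx
    rw [interior_Icc] at hx
    have hx' : x ∈ Set.Ioo (0:ℝ) 1 := ⟨hξs_pos.trans hx.1, hx.2⟩
    rw [(hderiv x hx').deriv]
    apply div_neg_of_neg_of_pos _ hl2
    have := hanti ⟨hξs_pos, hξs_lt1.le⟩ ⟨hξs_pos.trans hx.1, hx.2.le⟩ hx.1
    linarith [hg0 ▸ this]
  rw [isMaxOn_iff]
  intro x hx
  rcases le_total x ξs with h | h
  · rcases eq_or_lt_of_le h with rfl | hlt
    · exact le_rfl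
    · exact (hmono ⟨hx.1, h⟩ ⟨hξs_pos.le, le_rfl⟩ hlt).le
  · rcases eq_or_lt_of_le h with rfl | hlt
    · exact le_rfl
    · exact (hanti' ⟨le_rfl, hξs_lt1.le⟩ ⟨h, hx.2⟩ hlt).le
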